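/- arXiv:math-ph/0601056 — 2 statements merged into one kernel-verified Lean document; each statement's English description precedes it below -/
import Mathlib

section
/- For every t > 0, the integral ∫_0^1 ((λ² − 1)/(λ² + 1)) · (1 + t²)/((λ + t)(1 + λt)) dλ equals log(2t/(1+t)²). -/
open Real

theorem stmt_1 (t : ℝ) (ht : 0 < t) :
    ∫ l in (0:ℝ)..1, ((l ^ 2 - 1) / (l ^ 2 + 1)) * ((1 + t ^ 2) / ((l + t) * (1 + l * t)))
      = Real.log (2 * t / (1 + t) ^ 2) := by
  have key : ∀ l ∈ Set.uIcc (0:ℝ) 1,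
      HasDerivAt (fun x : ℝ => Real.log (1 + x ^ 2) - Real.log (x + t) - Real.log (1 + x * t))
        (((l ^ 2 - 1) / (l ^ 2 + 1)) * ((1 + t ^ 2) / ((l + t) * (1 + l * t)))) l := by
    intro l hl
    rw [Set.uIcc_of_le (by norm_num)] at hl
    obtain ⟨hl0, hl1⟩ := hl
    have h1 : (0:ℝ) < 1 + l ^ 2 := by positivity
    have h2 : (0:ℝ) < l + t := by linarith
    have h3 : (0:ℝ) < 1 + l * t := by nlinarith
    have d1 : HasDerivAt (fun x : ℝ => Real.log (1 + x ^ 2)) (2 * l / (1 + l ^ 2)) l := by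
      have : HasDerivAt (fun x : ℝ => 1 + x ^ 2) (2 * l) l := by
        simpa using ((hasDerivAt_pow 2 l).const_add 1)
      simpa using this.log (by positivity)
    have d2 : HasDerivAt (fun x : ℝ => Real.log (x + t)) (1 / (l + t)) l := by
      have : HasDerivAt (fun x : ℝ => x + t) 1 l := (hasDerivAt_id l).add_const t
      simpa using this.log h2.ne'
    have d3 : HasDerivAt (fun x : ℝ => Real.log (1 + x * t)) (t / (1 + l * t)) l := by
      have : HasDerivAt (fun x : ℝ => 1 + x * t) t l := by
        simpa using ((hasDerivAt_id l).mul_const t).const_add 1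
      simpa using this.log h3.ne'
    have := (d1.sub d2).sub d3
    refine this.congr_deriv ?_
    have h1' : l ^ 2 + 1 ≠ 0 := by positivity
    field_simp
    ring
  have hcont : IntervalIntegrable
      (fun l : ℝ => ((l ^ 2 - 1) / (l ^ 2 + 1)) * ((1 + t ^ 2) / ((l + t) * (1 + l * t))))
      MeasureTheory.volume 0 1 := by
    apply ContinuousOn.intervalIntegrable
    apply ContinuousOn.mul
    · exact (continuousOn_id.pow 2 |>.sub continuousOn_const).div
        ((continuousOn_id.pow 2).add continuousOn_const)
        (fun x _ => by positivity)
    · apply continuousOn_const.div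
      · exact (continuousOn_id.add continuousOn_const).mul
          (continuousOn_const.add (continuousOn_id.mul continuousOn_const))
      · intro x hx
        rw [Set.uIcc_of_le (by norm_num)] at hx
        have h2 : (0:ℝ) < x + t := by linarith [hx.1]
        have h3 : (0:ℝ) < 1 + x * t := by nlinarith [hx.1, hx.2]
        positivity
  rw [intervalIntegral.integral_eq_sub_of_hasDerivAt key hcont]
  have h1t : (0:ℝ) < 1 + t := by linarith
  rw [Real.log_div (by positivity) (by positivity), Real.log_mul (by norm_num) ht.ne',
    Real.log_pow]
  simp only [one_pow, mul_one, one_mul, zero_pow, zero_mul, mul_zero, add_zero, zero_add,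
    Real.log_one]
  ring_nf
  simp [Real.log_one]
end

section
/- For z in the open upper half-plane and γ ∈ [0,1], the analytic continuation f_γ(z) = (1/2)·4^γ·z^γ·(1+z)^{1−2γ} (principal branches) has strictly positive imaginary part. -/
open Complex

lemma cpow_polar {w : ℂ} (hw : w ≠ 0) (r : ℝ) :
    w ^ (r : ℂ) = ((‖w‖ ^ r : ℝ) : ℂ) *
      Complex.exp (((r * Complex.arg w : ℝ) : ℂ) * Complex.I) := by
  rw [Complex.cpow_def_of_ne_zero hw, Complex.log,
    Real.rpow_def_of_pos (norm_pos_iff.mpr hw), Complex.ofReal_exp, ← Complex.exp_add]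
  congr 1
  push_cast
  ring

lemma arg_pos_of_im_pos {w : ℂ} (hw : 0 < w.im) : 0 < Complex.arg w := by
  rcases lt_or_eq_of_le (Complex.arg_nonneg_iff.2 hw.le) with h | h
  · exact h
  · exfalso
    have := (Complex.arg_eq_zero_iff.1 h.symm).2
    linarith

theorem stmt_18 (z : ℂ) (hz : 0 < z.im) (γ : ℝ) (hγ : γ ∈ Set.Icc (0:ℝ) 1) :
    0 < ((1 / 2 : ℂ) * (4 : ℂ) ^ (γ : ℂ) * z ^ (γ : ℂ) * (1 + z) ^ ((1 : ℂ) - 2 * γ)).im := by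
  obtain ⟨hγ0, hγ1⟩ := hγ
  have hz0 : z ≠ 0 := fun h => by simp [h] at hz
  have h1zim : (1 + z).im = z.im := by simp
  have h1z0 : (1 + z) ≠ 0 := fun h => by rw [h] at h1zim; simp at h1zim; linarith
  set a := Complex.arg z with ha_def
  set b := Complex.arg (1 + z) with hb_def
  have ha0 : 0 < a := arg_pos_of_im_pos hz
  have hb0 : 0 < b := arg_pos_of_im_pos (by rw [h1zim]; exact hz)
  have hapi : a < Real.pi := Complex.arg_lt_pi_iff.2 (Or.inr (ne_of_gt hz))
  have hbpi : b < Real.pi := Complex.arg_lt_pi_iff.2 (Or.inr (by rw [h1zim]; exact ne_of_gt hz))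
  have habsz : 0 < ‖z‖ := norm_pos_iff.mpr hz0
  have habs1z : 0 < ‖1 + z‖ := norm_pos_iff.mpr h1z0
  -- b < a
  have hsin : Real.sin (a - b) = z.im / (‖z‖ * ‖1 + z‖) := by
    rw [Real.sin_sub, Complex.sin_arg, Complex.cos_arg h1z0, Complex.cos_arg hz0,
      Complex.sin_arg]
    simp only [Complex.add_re, Complex.add_im, Complex.one_re, Complex.one_im]
    field_simp
    ring
  have hsinpos : 0 < Real.sin (a - b) := by
    rw [hsin]; exact div_pos hz (mul_pos habsz habs1z)
  have hba : b < a := by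
    by_contra h
    push_neg at h
    have : Real.sin (a - b) ≤ 0 :=
      Real.sin_nonpos_of_nonpos_of_neg_pi_le (by linarith) (by linarith)
    linarith
  -- angle bounds
  set θ := γ * a + (1 - 2 * γ) * b with hθ_def
  have hθ0 : 0 < θ := by
    rcases eq_or_lt_of_le hγ0 with h | h
    · rw [hθ_def, ← h]; ring_nf; linarith
    · nlinarith [mul_pos h (sub_pos.2 hba), mul_nonneg (sub_nonneg.2 hγ1) hb0.le]
  have hθpi : θ < Real.pi := by
    rcases eq_or_lt_of_le hγ0 with h | h
    · rw [hθ_def, ← h]; ring_nf; linarith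
    · nlinarith [mul_pos h (show (0:ℝ) < Real.pi - (a - b) by linarith),
        mul_nonneg (sub_nonneg.2 hγ1) (show (0:ℝ) ≤ Real.pi - b by linarith)]
  -- rewrite expression
  have h4 : (4 : ℂ) ^ (γ : ℂ) = (((4:ℝ) ^ γ : ℝ) : ℂ) := by
    rw [Complex.ofReal_cpow (by norm_num : (0:ℝ) ≤ 4)]
    norm_num
  have hc : ((1:ℂ) - 2 * (γ:ℂ)) = (((1 - 2*γ : ℝ)) : ℂ) := by push_cast; ring
  rw [h4, cpow_polar hz0, hc, cpow_polar h1z0]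
  set C : ℝ := (1/2) * (4:ℝ)^γ * ‖z‖ ^ γ * ‖1+z‖ ^ (1 - 2*γ) with hC
  have hCpos : 0 < C := by positivity
  have hexp : Complex.exp (((γ * a : ℝ) : ℂ) * Complex.I) *
      Complex.exp ((((1 - 2*γ) * b : ℝ) : ℂ) * Complex.I) =
      Complex.exp (((θ : ℝ) : ℂ) * Complex.I) := by
    rw [← Complex.exp_add]
    congr 1
    rw [hθ_def]
    push_cast
    ring
  have key : (1 / 2 : ℂ) * (((4:ℝ)^γ : ℝ) : ℂ) *
      (((‖z‖ ^ γ : ℝ) : ℂ) * Complex.exp (((γ * a : ℝ) : ℂ) * Complex.I)) *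
      (((‖1+z‖ ^ (1 - 2*γ) : ℝ) : ℂ) *
        Complex.exp ((((1 - 2*γ) * b : ℝ) : ℂ) * Complex.I)) =
      ((C : ℝ) : ℂ) * Complex.exp (((θ : ℝ) : ℂ) * Complex.I) := by
    rw [← hexp, hC]
    push_cast
    ring
  rw [key, Complex.exp_mul_I]
  simp only [Complex.mul_im, Complex.add_im, Complex.add_re, Complex.ofReal_re,
    Complex.ofReal_im, Complex.mul_re, Complex.mul_im, Complex.I_re, Complex.I_im,
    Complex.cos_ofReal_re, Complex.sin_ofReal_re, Complex.cos_ofReal_im, Complex.sin_ofReal_im]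
  have hs : 0 < Real.sin θ := Real.sin_pos_of_pos_of_lt_pi hθ0 hθpi
  nlinarith [hCpos, hs]
end
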